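/- Fix τ₀ in the upper half plane ℍ. The entire function z ↦ θ₁₁(z; τ₀) has a zero of order exactly 1 at the origin: θ₁₁(0; τ₀) = 0 and the complex derivative of z ↦ θ₁₁(z; τ₀) at z = 0 is nonzero. -/

import Mathlib

open Filter Topology

noncomputable section

/-- The elliptic theta function
`θ₁₁(z;τ) = ∑_{m ∈ ℤ} exp(π√-1((m+1/2)²τ + 2(m+1/2)(z+1/2)))`. -/
def theta (z τ : ℂ) : ℂ :=
  ∑' m : ℤ, Complex.exp ((Real.pi : ℂ) * Complex.I *
    (((m : ℂ) + 1 / 2) ^ 2 * τ + 2 * ((m : ℂ) + 1 / 2) * (z + 1 / 2)))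

section aux

open Complex

local notation "π" => Real.pi

lemma natAbs_le_sq_add (n : ℤ) (hn : n ≠ -1) : (n.natAbs : ℤ) ≤ n ^ 2 + n := by
  rcases le_or_gt 0 n with h | h
  · rw [Int.natAbs_of_nonneg h]; nlinarith
  · have h2 : n ≤ -2 := by omega
    rw [Int.ofNat_natAbs_of_nonpos h.le]; nlinarith

lemma r_le_quarter {t : ℝ} (hτ : 1 / 2 ≤ t) : Real.exp (-π * t) ≤ 1 / 4 := by
  have h1 : Real.exp (-π * t) ≤ Real.exp (-(π * (1/2))) := by
    apply Real.exp_le_exp.mpr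
    nlinarith [Real.pi_pos]
  have h2 : (4 : ℝ) ≤ Real.exp (π * (1/2)) := by
    have e1 : Real.exp (3/2 : ℝ) ≤ Real.exp (π * (1/2)) :=
      Real.exp_le_exp.mpr (by nlinarith [Real.pi_gt_three])
    have e3 : Real.exp (3/2 : ℝ) = Real.exp 1 * Real.exp (1/2 : ℝ) := by
      rw [← Real.exp_add]; norm_num
    have h3 : (3/2 : ℝ) ≤ Real.exp (1/2 : ℝ) := by
      have := Real.add_one_le_exp (1/2 : ℝ); linarith
    nlinarith [Real.exp_one_gt_d9, Real.exp_pos (1/2 : ℝ)]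
  rw [Real.exp_neg] at h1
  refine h1.trans ?_
  have := inv_anti₀ (show (0:ℝ) < 4 by norm_num) h2
  linarith

/-- The half-lattice-point zero of `jacobiTheta₂`. -/
lemma jt2_half_zero (τ : ℂ) : jacobiTheta₂ ((1 + τ) / 2) τ = 0 := by
  have h2 : jacobiTheta₂ ((1 + τ) / 2 - τ) τ = jacobiTheta₂ ((1 + τ) / 2) τ := by
    rw [show (1 + τ) / 2 - τ = -((τ - 1) / 2) by ring, jacobiTheta₂_neg_left,
      show (1 + τ) / 2 = (τ - 1) / 2 + 1 by ring, jacobiTheta₂_add_left]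
  have h1 : jacobiTheta₂ ((1 + τ) / 2 - τ + τ) τ =
      cexp (-π * I * (τ + 2 * ((1 + τ) / 2 - τ))) * jacobiTheta₂ ((1 + τ) / 2 - τ) τ :=
    jacobiTheta₂_add_left' _ τ
  rw [sub_add_cancel, h2, show -(π : ℂ) * I * (τ + 2 * ((1 + τ) / 2 - τ)) = -(π * I) by ring,
    Complex.exp_neg, Complex.exp_pi_mul_I] at h1
  have : (2 : ℂ) * jacobiTheta₂ ((1 + τ) / 2) τ = 0 := by linear_combination h1
  simpa using this


lemma theta_eq (z τ : ℂ) :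
    theta z τ = cexp (π * I * (τ / 4 + z + 1 / 2)) * jacobiTheta₂ (z + (1 + τ) / 2) τ := by
  rw [jacobiTheta₂, ← tsum_mul_left]
  refine tsum_congr fun m ↦ ?_
  rw [jacobiTheta₂_term, ← Complex.exp_add]
  congr 1
  ring


lemma gth_shift (τ : ℂ) (n : ℤ) :
    jacobiTheta₂' ((1 + (τ + n)) / 2) (τ + n) = jacobiTheta₂' ((1 + τ) / 2) τ := by
  refine tsum_congr fun m ↦ ?_
  obtain ⟨c, hc⟩ := Int.even_mul_succ_self m
  have hc' : (m : ℂ) * (m + 1) = c + c := by exact_mod_cast congrArg (Int.cast : ℤ → ℂ) hc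
  unfold jacobiTheta₂'_term jacobiTheta₂_term
  congr 1
  rw [show 2 * π * I * m * ((1 + (τ + n)) / 2) + π * I * m ^ 2 * (τ + n)
      = (2 * π * I * m * ((1 + τ) / 2) + π * I * m ^ 2 * τ) + (n * c) * (2 * π * I) by
    linear_combination (π * I * (n : ℂ)) * hc',
    Complex.exp_add, ← Int.cast_mul, Complex.exp_int_mul_two_pi_mul_I, mul_one]


lemma gth_S {τ : ℂ} (hτ : 0 < τ.im) : ∃ c : ℂ, c ≠ 0 ∧
    jacobiTheta₂' ((1 + τ) / 2) τ = c * jacobiTheta₂' ((1 + (-1 / τ)) / 2) (-1 / τ) := by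
  have h0 : τ ≠ 0 := fun h ↦ by simp [h] at hτ
  have key := jacobiTheta₂'_functional_equation ((1 + τ) / 2) τ
  have hz : (1 + τ) / 2 / τ = -((1 + (-1 / τ)) / 2) + 1 := by field_simp; ring
  rw [hz, jacobiTheta₂'_add_left, jacobiTheta₂'_neg_left, jacobiTheta₂_add_left,
    jacobiTheta₂_neg_left, jt2_half_zero, mul_zero, sub_zero] at key
  refine ⟨-(1 / (-I * τ) ^ (1 / 2 : ℂ) * cexp (-π * I * ((1 + τ) / 2) ^ 2 / τ) / τ), ?_, by
    rw [key]; ring⟩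
  have hX : (-I * τ) ^ (1 / 2 : ℂ) ≠ 0 := by
    rw [Ne, Complex.cpow_eq_zero_iff]
    simp [I_ne_zero, h0]
  simp only [neg_ne_zero, div_ne_zero_iff]
  exact ⟨mul_ne_zero (by simpa using hX) (Complex.exp_ne_zero _), h0⟩


lemma theta_zero (τ : ℂ) : theta 0 τ = 0 := by
  rw [theta_eq, zero_add, jt2_half_zero, mul_zero]

lemma theta_deriv {τ : ℂ} (hτ : 0 < τ.im) :
    deriv (fun z ↦ theta z τ) 0 =
      cexp (π * I * (τ / 4 + 1 / 2)) * jacobiTheta₂' ((1 + τ) / 2) τ := by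
  have hfun : (fun z ↦ theta z τ) =
      fun z ↦ cexp (π * I * (τ / 4 + z + 1 / 2)) * jacobiTheta₂ (z + (1 + τ) / 2) τ :=
    funext fun z ↦ theta_eq z τ
  have h1 : HasDerivAt (fun z : ℂ ↦ cexp (π * I * (τ / 4 + z + 1 / 2)))
      (cexp (π * I * (τ / 4 + 0 + 1 / 2)) * (π * I)) 0 := by
    have hin : HasDerivAt (fun z : ℂ ↦ π * I * (τ / 4 + z + 1 / 2)) (π * I) 0 := by
      simpa only [mul_one] using (((hasDerivAt_id' (0:ℂ)).const_add (τ / 4)).add_const (1/2)).const_mul (π * I)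
    exact hin.cexp
  have h2 : HasDerivAt (fun z : ℂ ↦ jacobiTheta₂ (z + (1 + τ) / 2) τ)
      (jacobiTheta₂' ((1 + τ) / 2) τ) 0 := by
    have := (hasDerivAt_jacobiTheta₂_fst ((0 : ℂ) + (1 + τ) / 2) hτ).comp 0
      ((hasDerivAt_id (0:ℂ)).add_const ((1 + τ) / 2))
    simpa [Function.comp_def] using this
  have h := h1.fun_mul h2
  rw [hfun, h.deriv, zero_add, jt2_half_zero, mul_zero, zero_add]
  ring_nf


lemma gth_ne_of_half_le {τ : ℂ} (hτ : 1 / 2 ≤ τ.im) : jacobiTheta₂' ((1 + τ) / 2) τ ≠ 0 := by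
  have hτ0 : 0 < τ.im := lt_of_lt_of_le (by norm_num) hτ
  set t : ℝ := τ.im with ht
  set r : ℝ := Real.exp (-π * t) with hrdef
  have hr0 : 0 < r := Real.exp_pos _
  have hr4 : r ≤ 1 / 4 := r_le_quarter hτ
  set f : ℤ → ℂ := fun n ↦ jacobiTheta₂'_term n ((1 + τ) / 2) τ with hf
  have hsum : HasSum f (jacobiTheta₂' ((1 + τ) / 2) τ) := hasSum_jacobiTheta₂'_term _ hτ0
  -- exact norm of each term
  have hnorm : ∀ n : ℤ, ‖f n‖ = 2 * π * |(n : ℝ)| * Real.exp (-(π * t) * ((n : ℝ) ^ 2 + n)) := by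
    intro n
    have hE : 2 * (π:ℂ) * I * n * ((1 + τ) / 2) + π * I * (n:ℂ) ^ 2 * τ =
        ((π * (n:ℝ) : ℝ) : ℂ) * I + ((π * ((n:ℝ) ^ 2 + n) : ℝ) : ℂ) * (τ * I) := by
      push_cast; ring
    rw [hf]
    simp only [jacobiTheta₂'_term, jacobiTheta₂_term, norm_mul, Real.norm_eq_abs,
      Complex.norm_exp, hE, map_mul, Complex.norm_real, Complex.norm_I, Complex.norm_two,
      Complex.norm_intCast, Complex.add_re, Complex.mul_re, Complex.ofReal_re,
      Complex.ofReal_im, Complex.I_re, Complex.I_im, Complex.mul_im]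
    rw [abs_of_pos Real.pi_pos, ht]
    ring_nf
  -- majorant
  set M : ℤ → ℝ := fun n ↦ 2 * π * (n.natAbs * r ^ n.natAbs) with hMdef
  have hMnonneg : ∀ n : ℤ, 0 ≤ M n := fun n ↦ by positivity
  have hM : ∀ n : ℤ, n ≠ -1 → ‖f n‖ ≤ M n := by
    intro n hn
    rw [hnorm n]
    have h1 : Real.exp (-(π * t) * ((n : ℝ) ^ 2 + n)) ≤ r ^ n.natAbs := by
      rw [hrdef, ← Real.exp_nat_mul]
      apply Real.exp_le_exp.mpr
      have hin : (n.natAbs : ℝ) ≤ (n : ℝ) ^ 2 + n := by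
        have h0 : ((n.natAbs : ℤ) : ℝ) ≤ ((n ^ 2 + n : ℤ) : ℝ) := by
          exact_mod_cast natAbs_le_sq_add n hn
        push_cast at h0
        rw [Nat.cast_natAbs, Int.cast_abs]
        exact h0
      have hππ : (0:ℝ) < π * t := mul_pos Real.pi_pos hτ0
      have := mul_le_mul_of_nonneg_left hin hππ.le
      nlinarith
    have h2 : |(n : ℝ)| = (n.natAbs : ℝ) := by rw [Nat.cast_natAbs, Int.cast_abs]
    rw [h2]
    calc 2 * π * (n.natAbs : ℝ) * Real.exp (-(π * t) * ((n : ℝ) ^ 2 + n))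
        ≤ 2 * π * (n.natAbs : ℝ) * r ^ n.natAbs := by
          apply mul_le_mul_of_nonneg_left h1; positivity
      _ = M n := by rw [hMdef]; ring
  -- sum of majorant
  have hrn : ‖r‖ < 1 := by rw [Real.norm_eq_abs, abs_of_pos hr0]; linarith
  have hgeo : HasSum (fun k : ℕ ↦ 2 * π * ((k : ℝ) * r ^ k)) (2 * π * (r / (1 - r) ^ 2)) :=
    (hasSum_coe_mul_geometric_of_norm_lt_one hrn).mul_left _
  have hMsum : HasSum M (4 * π * (r / (1 - r) ^ 2)) := by
    have h₁ : HasSum (fun k : ℕ ↦ M k) (2 * π * (r / (1 - r) ^ 2)) := by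
      have he : (fun k : ℕ ↦ M k) = fun k : ℕ ↦ 2 * π * ((k : ℝ) * r ^ k) := by
        funext k; simp [hMdef]
      rw [he]; exact hgeo
    have h₂ : HasSum (fun k : ℕ ↦ M (-(k + 1))) (2 * π * (r / (1 - r) ^ 2)) := by
      have he : (fun k : ℕ ↦ M (-(k + 1))) =
          fun k : ℕ ↦ 2 * π * (((k + 1 : ℕ) : ℝ) * r ^ (k + 1 : ℕ)) := by
        funext k
        have hna : ((-((k : ℤ) + 1))).natAbs = k + 1 := by omega
        simp only [hMdef, hna]
      rw [he]
      exact (hasSum_nat_add_iff (f := fun k : ℕ ↦ 2 * π * ((k : ℝ) * r ^ k)) 1).mpr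
        (by simpa using hgeo)
    have h3 := HasSum.of_nat_of_neg_add_one h₁ h₂
    rw [show 2 * π * (r / (1 - r) ^ 2) + 2 * π * (r / (1 - r) ^ 2)
        = 4 * π * (r / (1 - r) ^ 2) by ring] at h3
    exact h3
  -- the dominant term
  have hfm1 : f (-1) = 2 * π * I := by
    rw [hf]
    simp only [jacobiTheta₂'_term, jacobiTheta₂_term]
    rw [show 2 * (π:ℂ) * I * ((-1 : ℤ) : ℂ) * ((1 + τ) / 2) + π * I * ((-1 : ℤ) : ℂ) ^ 2 * τ
        = -(π * I) by ring,
      Complex.exp_neg, Complex.exp_pi_mul_I]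
    push_cast
    norm_num
  -- split off the dominant term
  have hsplit : jacobiTheta₂' ((1 + τ) / 2) τ
      = f (-1) + ∑' n : ℤ, (if n = -1 then 0 else f n) :=
    Summable.tsum_eq_add_tsum_ite hsum.summable (-1)
  have hbnd : ∀ n : ℤ, ‖(if n = -1 then 0 else f n)‖ ≤ M n := by
    intro n
    split_ifs with h
    · simpa using hMnonneg n
    · exact hM n h
  have hsn : Summable fun n : ℤ ↦ ‖(if n = -1 then 0 else f n)‖ :=
    Summable.of_nonneg_of_le (fun _ ↦ norm_nonneg _) hbnd hMsum.summable
  have htail : ‖∑' n : ℤ, (if n = -1 then 0 else f n)‖ ≤ 4 * π * (r / (1 - r) ^ 2) := by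
    calc ‖∑' n : ℤ, (if n = -1 then 0 else f n)‖
        ≤ ∑' n : ℤ, ‖(if n = -1 then 0 else f n)‖ := norm_tsum_le_tsum_norm hsn
      _ ≤ ∑' n : ℤ, M n := Summable.tsum_le_tsum hbnd hsn hMsum.summable
      _ = 4 * π * (r / (1 - r) ^ 2) := hMsum.tsum_eq
  have hnum : 4 * π * (r / (1 - r) ^ 2) < 2 * π := by
    have hd : (0 : ℝ) < (1 - r) ^ 2 := by nlinarith
    have h5 : r / (1 - r) ^ 2 ≤ 4 / 9 := by
      rw [div_le_iff₀ hd]; nlinarith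
    nlinarith [Real.pi_pos]
  intro hg
  rw [hg, hfm1] at hsplit
  have h2π : ‖∑' n : ℤ, (if n = -1 then 0 else f n)‖ = 2 * π := by
    rw [show (∑' n : ℤ, (if n = -1 then 0 else f n)) = -(2 * π * I) by
      linear_combination -hsplit]
    simp [abs_of_pos Real.pi_pos, Real.norm_eq_abs, Complex.norm_two]
  rw [h2π] at htail
  linarith

lemma gth_ne (k : ℕ) : ∀ τ : ℂ, 0 < τ.im → 1 / 2 * (1 / 2) ^ k ≤ τ.im →
    jacobiTheta₂' ((1 + τ) / 2) τ ≠ 0 := by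
  induction k with
  | zero => exact fun τ h0 hbnd ↦ gth_ne_of_half_le (by simpa using hbnd)
  | succ k ih =>
    intro τ h0 hbnd
    rcases le_or_gt (1/2 : ℝ) τ.im with h | h
    · exact gth_ne_of_half_le h
    · set n : ℤ := -(round τ.re) with hn
      set τ' : ℂ := τ + n with hτ'
      have him : τ'.im = τ.im := by simp [hτ']
      have hre : |τ'.re| ≤ 1 / 2 := by
        have : τ'.re = τ.re - round τ.re := by
          simp [hτ', hn]; ring
        rw [this]
        exact abs_sub_round τ.re
      have hτ'0 : 0 < τ'.im := him ▸ h0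
      have hns0 : 0 < Complex.normSq τ' :=
        Complex.normSq_pos.mpr (fun hh ↦ by simp [hh] at hτ'0)
      have hns : Complex.normSq τ' ≤ 1 / 2 := by
        rw [Complex.normSq_apply]
        have h1 : τ'.re * τ'.re ≤ 1 / 4 := by nlinarith [abs_nonneg τ'.re, neg_abs_le τ'.re, le_abs_self τ'.re]
        nlinarith [him ▸ h0, him ▸ h]
      have himσ : (-1 / τ').im = τ'.im / Complex.normSq τ' := by
        rw [neg_div, Complex.neg_im, one_div, Complex.inv_im]
        ring
      have hσ0 : 0 < (-1 / τ').im := by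
        rw [himσ]; positivity
      have hσb : 1 / 2 * (1 / 2) ^ k ≤ (-1 / τ').im := by
        rw [himσ]
        have h2 : 2 * τ'.im ≤ τ'.im / Complex.normSq τ' := by
          rw [le_div_iff₀ hns0]; nlinarith
        have h3 : 1 / 2 * (1 / 2) ^ k ≤ 2 * τ'.im := by
          rw [him]
          calc 1 / 2 * (1 / 2) ^ k = 2 * (1 / 2 * (1 / 2) ^ (k + 1)) := by ring
            _ ≤ 2 * τ.im := by linarith
        linarith
      obtain ⟨c, hc, heq⟩ := gth_S hτ'0
      have hσne := ih (-1 / τ') hσ0 hσb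
      have hτ'ne : jacobiTheta₂' ((1 + τ') / 2) τ' ≠ 0 := by
        rw [heq]; exact mul_ne_zero hc hσne
      have hback : jacobiTheta₂' ((1 + τ) / 2) τ = jacobiTheta₂' ((1 + τ') / 2) τ' := by
        have h5 := gth_shift τ' (-n)
        rw [show ((-n : ℤ) : ℂ) = -(n : ℂ) by push_cast; ring,
          show τ' + -(n : ℂ) = τ by rw [hτ']; ring] at h5
        exact h5
      rw [hback]
      exact hτ'ne

end aux

/-- For `τ₀ ∈ ℍ`, the entire function `z ↦ θ₁₁(z; τ₀)` has a zero of order exactly one at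
the origin: it vanishes at `0` and its complex derivative at `0` is nonzero. -/
theorem theta_simple_zero_at_origin (τ₀ : ℂ) (hτ₀ : 0 < τ₀.im) :
    theta 0 τ₀ = 0 ∧ deriv (fun z => theta z τ₀) 0 ≠ 0 := by
  refine ⟨theta_zero τ₀, ?_⟩
  rw [theta_deriv hτ₀]
  refine mul_ne_zero (Complex.exp_ne_zero _) ?_
  obtain ⟨k, hk⟩ := exists_pow_lt_of_lt_one hτ₀ (show (1:ℝ)/2 < 1 by norm_num)
  refine gth_ne k τ₀ hτ₀ ?_
  have : (0:ℝ) < (1/2 : ℝ)^k := by positivity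
  nlinarith

end
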